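/- Let λ be a partition and v = (i,j) ∈ D(λ) a cell with (i+1, j+1) ∈ D(λ) (so v is the top of a d_3-interval [(i+1,j+1),(i,j)] with sides (i,j+1) and (i+1,j) in the order where (1,1) is maximal). Then the inductively defined hook monomial satisfies z[H_{D(λ)}(i,j)] = z[H_{D(λ)}(i,j+1)] · z[H_{D(λ)}(i+1,j)] / z[H_{D(λ)}(i+1,j+1)], and this recursion together with the base case z[H(v)] = ∏_{w ≤ v} z_{c(w)} for cells in the first row or column implies z[H_{D(λ)}(i,j)] = ∏_{cells (a,b) in the hook of (i,j)} z_{b−a}, i.e., z[H(i,j)] = ∏_{b=j}^{λ_i} z_{b−i} · ∏_{a=i+1}^{λ'_j} z_{j−a}, where c is the content coloring c(a,b) = b−a. -/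

import Mathlib

open Finset in
/-- For a partition `λ`, the inductively defined hook monomials of the cell
poset `D(λ)` (here recorded as exponent vectors over the colors `ℤ`, with the
content coloring `c(a,b) = b - a`): the recursion
`z[H(i,j)] · z[H(i+1,j+1)] = z[H(i,j+1)] · z[H(i+1,j)]` for cells with
`(i+1,j+1) ∈ D(λ)`, together with the base case
`z[H(v)] = ∏_{w ≤ v} z_{c(w)}` when `(i+1,j+1) ∉ D(λ)`, implies that
`z[H(i,j)] = ∏_{b=j}^{λ_i} z_{b-i} · ∏_{a=i+1}^{λ'_j} z_{j-a}`,
the product of the variables over the hook of `(i,j)`. -/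
theorem stmt_17 (lam : ℕ → ℕ) (hlam : ∀ i j, 1 ≤ i → i ≤ j → lam j ≤ lam i)
    (N : ℕ) (hN : ∀ i, N < i → lam i = 0)
    (Dfin : Finset (ℕ × ℕ))
    (hD : Dfin = ((Icc 1 N) ×ˢ (Icc 1 (lam 1))).filter (fun p => p.2 ≤ lam p.1))
    -- the conjugate partition
    (conj : ℕ → ℕ)
    (hconj : ∀ j : ℕ, conj j = ((Icc 1 N).filter (fun a => j ≤ lam a)).card)
    -- the inductively defined hook exponent vectors
    (H : ℕ × ℕ → (ℤ →₀ ℕ))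
    -- base case: cells not the top of a d₃-interval
    (hbase : ∀ p ∈ Dfin, (p.1 + 1, p.2 + 1) ∉ Dfin →
      H p = ∑ w ∈ Dfin.filter (fun w => p.1 ≤ w.1 ∧ p.2 ≤ w.2),
        Finsupp.single ((w.2 : ℤ) - w.1) 1)
    -- recursion: tops of d₃-intervals (multiplicatively,
    -- `z[H(i,j)] = z[H(i,j+1)]·z[H(i+1,j)]/z[H(i+1,j+1)]`)
    (hrec : ∀ p ∈ Dfin, (p.1 + 1, p.2 + 1) ∈ Dfin →
      H p + H (p.1 + 1, p.2 + 1) = H (p.1, p.2 + 1) + H (p.1 + 1, p.2)) :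
    ∀ p ∈ Dfin,
      H p = (∑ b ∈ Icc p.2 (lam p.1), Finsupp.single ((b : ℤ) - p.1) 1) +
        ∑ a ∈ Icc (p.1 + 1) (conj p.2), Finsupp.single ((p.2 : ℤ) - a) 1 := by
  -- membership characterization
  have hmem : ∀ p : ℕ × ℕ, p ∈ Dfin ↔ 1 ≤ p.1 ∧ p.1 ≤ N ∧ 1 ≤ p.2 ∧ p.2 ≤ lam p.1 := by
    intro p
    subst hD
    simp only [Finset.mem_filter, Finset.mem_product, Finset.mem_Icc]
    constructor
    · rintro ⟨⟨⟨h1, h2⟩, h3, _⟩, h5⟩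
      exact ⟨h1, h2, h3, h5⟩
    · rintro ⟨h1, h2, h3, h5⟩
      exact ⟨⟨⟨h1, h2⟩, h3, le_trans h5 (hlam 1 p.1 le_rfl h1)⟩, h5⟩
  -- conjugate characterization
  have hconj' : ∀ j a : ℕ, 1 ≤ j → 1 ≤ a → (a ≤ conj j ↔ j ≤ lam a) := by
    intro j a hj ha
    set S := (Icc 1 N).filter (fun a => j ≤ lam a) with hS
    have hmemS : ∀ x, x ∈ S ↔ (1 ≤ x ∧ x ≤ N) ∧ j ≤ lam x := by
      intro x; simp [hS, Finset.mem_filter, Finset.mem_Icc, and_assoc]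
    have hdown : ∀ x ∈ S, ∀ y, 1 ≤ y → y ≤ x → y ∈ S := by
      intro x hx y hy1 hyx
      rw [hmemS] at hx ⊢
      exact ⟨⟨hy1, le_trans hyx hx.1.2⟩, le_trans hx.2 (hlam y x hy1 hyx)⟩
    have hsub : ∀ x ∈ S, Icc 1 x ⊆ S := by
      intro x hx y hy
      rw [Finset.mem_Icc] at hy
      exact hdown x hx y hy.1 hy.2
    have hSI : S = Icc 1 S.card := by
      apply Finset.Subset.antisymm
      · intro x hx
        rw [Finset.mem_Icc]
        refine ⟨(hmemS x).1 hx |>.1.1, ?_⟩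
        calc x = (Icc 1 x).card := by rw [Nat.card_Icc]; omega
        _ ≤ S.card := Finset.card_le_card (hsub x hx)
      · intro x hx
        rw [Finset.mem_Icc] at hx
        by_contra hxS
        have hlt : ∀ y ∈ S, y < x := by
          intro y hy
          by_contra hge
          exact hxS (hdown y hy x hx.1 (by omega))
        have : S ⊆ Ico 1 x := by
          intro y hy
          rw [Finset.mem_Ico]
          exact ⟨((hmemS y).1 hy).1.1, hlt y hy⟩
        have := Finset.card_le_card this
        rw [Nat.card_Ico] at this
        omega
    rw [hconj, ← hS]
    constructor
    · intro h
      have : a ∈ S := by rw [hSI, Finset.mem_Icc]; exact ⟨ha, h⟩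
      exact ((hmemS a).1 this).2
    · intro h
      have haN : a ≤ N := by
        by_contra hc
        have := hN a (by omega)
        omega
      have : a ∈ S := (hmemS a).2 ⟨⟨ha, haN⟩, h⟩
      rw [hSI, Finset.mem_Icc] at this
      exact this.2
  -- abbreviation for the hook sum
  set hk : ℕ × ℕ → (ℤ →₀ ℕ) := fun p =>
    (∑ b ∈ Icc p.2 (lam p.1), Finsupp.single ((b : ℤ) - p.1) 1) +
      ∑ a ∈ Icc (p.1 + 1) (conj p.2), Finsupp.single ((p.2 : ℤ) - a) 1 with hhk
  -- the base case computation
  have hbase' : ∀ p ∈ Dfin, (p.1 + 1, p.2 + 1) ∉ Dfin →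
      (∑ w ∈ Dfin.filter (fun w => p.1 ≤ w.1 ∧ p.2 ≤ w.2),
        Finsupp.single ((w.2 : ℤ) - w.1) 1) = hk p := by
    intro p hp hp1
    obtain ⟨hp11, hp1N, hp21, hp2l⟩ := (hmem p).1 hp
    have hsplit : Dfin.filter (fun w => p.1 ≤ w.1 ∧ p.2 ≤ w.2) =
        ({p.1} ×ˢ Icc p.2 (lam p.1)) ∪ ((Icc (p.1 + 1) (conj p.2)) ×ˢ {p.2}) := by
      ext w
      simp only [Finset.mem_filter, Finset.mem_union, Finset.mem_product,
        Finset.mem_singleton, Finset.mem_Icc]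
      constructor
      · rintro ⟨hw, hw1, hw2⟩
        obtain ⟨hw11, hw1N, hw21, hw2l⟩ := (hmem w).1 hw
        rcases eq_or_lt_of_le hw1 with h | h
        · exact Or.inl ⟨h.symm, hw2, by rw [h]; exact hw2l⟩
        · have hw2eq : w.2 = p.2 := by
            by_contra hne
            apply hp1
            rw [hmem]
            refine ⟨by omega, by omega, by omega, ?_⟩
            have : p.2 + 1 ≤ w.2 := by omega
            calc (p.2 + 1 : ℕ) ≤ w.2 := this
            _ ≤ lam w.1 := hw2l
            _ ≤ lam (p.1 + 1) := hlam (p.1 + 1) w.1 (by omega) (by omega)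
          refine Or.inr ⟨⟨by omega, ?_⟩, hw2eq⟩
          rw [hconj' p.2 w.1 hp21 hw11, ← hw2eq]
          exact hw2l
      · rintro (⟨hw1, hw2a, hw2b⟩ | ⟨⟨hw1a, hw1b⟩, hw2⟩)
        · refine ⟨(hmem w).2 ⟨by omega, by omega, by omega, by rw [hw1]; exact hw2b⟩,
            by omega, by omega⟩
        · have hwl : p.2 ≤ lam w.1 := (hconj' p.2 w.1 hp21 (by omega)).1 hw1b
          have hwN : w.1 ≤ N := by
            by_contra hc
            have := hN w.1 (by omega)
            omega
          exact ⟨(hmem w).2 ⟨by omega, hwN, by omega, by rw [hw2]; exact hwl⟩,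
            by omega, by omega⟩
    have hdisj : Disjoint ({p.1} ×ˢ Icc p.2 (lam p.1))
        ((Icc (p.1 + 1) (conj p.2)) ×ˢ ({p.2} : Finset ℕ)) := by
      rw [Finset.disjoint_left]
      rintro w hw hw'
      simp only [Finset.mem_product, Finset.mem_singleton, Finset.mem_Icc] at hw hw'
      omega
    rw [hsplit, Finset.sum_union hdisj, hhk]
    congr 1
    · rw [Finset.sum_product]
      simp
    · rw [Finset.sum_product]
      simp
  -- small sum-splitting lemma
  have hsum : ∀ (a b : ℕ) (f : ℕ → ℤ →₀ ℕ), a ≤ b →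
      ∑ x ∈ Icc a b, f x = f a + ∑ x ∈ Icc (a + 1) b, f x := by
    intro a b f h
    rw [Finset.Icc_add_one_left_eq_Ioc, ← Finset.Ioc_insert_left h, Finset.sum_insert (by simp)]
  -- the key combinatorial identity for tops of d₃-intervals
  have hkey : ∀ p ∈ Dfin, (p.1 + 1, p.2 + 1) ∈ Dfin →
      hk p + hk (p.1 + 1, p.2 + 1) = hk (p.1, p.2 + 1) + hk (p.1 + 1, p.2) := by
    intro p hp hq
    obtain ⟨hp11, hp1N, hp21, hp2l⟩ := (hmem p).1 hp
    obtain ⟨_, hq1N, _, hq2l⟩ := (hmem (p.1 + 1, p.2 + 1)).1 hq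
    simp only at hq2l hq1N
    have h1 : p.2 ≤ lam p.1 := hp2l
    have h2 : p.2 ≤ lam (p.1 + 1) := by omega
    have h3 : p.1 + 1 ≤ conj p.2 := (hconj' p.2 (p.1 + 1) hp21 (by omega)).2 h2
    have h4 : p.1 + 1 ≤ conj (p.2 + 1) := (hconj' (p.2 + 1) (p.1 + 1) (by omega) (by omega)).2 hq2l
    simp only [hhk]
    rw [hsum p.2 (lam p.1) _ h1, hsum p.2 (lam (p.1 + 1)) _ h2,
      hsum (p.1 + 1) (conj p.2) _ h3, hsum (p.1 + 1) (conj (p.2 + 1)) _ h4]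
    have heq : ((p.2 + 1 : ℕ) : ℤ) - ((p.1 + 1 : ℕ) : ℤ) = (p.2 : ℤ) - (p.1 : ℤ) := by
      push_cast; ring
    rw [heq]
    abel
  -- main induction
  suffices key : ∀ n : ℕ, ∀ p ∈ Dfin, N + lam 1 ≤ p.1 + p.2 + n → H p = hk p by
    intro p hp
    exact key (N + lam 1) p hp (by omega)
  intro n
  induction n with
  | zero =>
    intro p hp hle
    have hnot : (p.1 + 1, p.2 + 1) ∉ Dfin := by
      intro hc
      obtain ⟨_, h1, _, h2⟩ := (hmem _).1 hc
      simp only at h1 h2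
      have : p.2 + 1 ≤ lam 1 := le_trans h2 (hlam 1 (p.1 + 1) le_rfl (by omega))
      omega
    rw [hbase p hp hnot]
    exact hbase' p hp hnot
  | succ n ih =>
    intro p hp hle
    by_cases hc : (p.1 + 1, p.2 + 1) ∈ Dfin
    · obtain ⟨hp11, hp1N, hp21, hp2l⟩ := (hmem p).1 hp
      obtain ⟨_, hq1N, _, hq2l⟩ := (hmem _).1 hc
      simp only at hq1N hq2l
      have hm1 : (p.1, p.2 + 1) ∈ Dfin := by
        rw [hmem]
        refine ⟨hp11, hp1N, by omega, ?_⟩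
        simp only
        calc p.2 + 1 ≤ lam (p.1 + 1) := hq2l
        _ ≤ lam p.1 := hlam p.1 (p.1 + 1) hp11 (by omega)
      have hm2 : (p.1 + 1, p.2) ∈ Dfin := by
        rw [hmem]
        exact ⟨by omega, hq1N, hp21, by simp only; omega⟩
      have e1 := ih (p.1, p.2 + 1) hm1 (by simp only; omega)
      have e2 := ih (p.1 + 1, p.2) hm2 (by simp only; omega)
      have e3 := ih (p.1 + 1, p.2 + 1) hc (by simp only; omega)
      have := hrec p hp hc
      rw [e1, e2, e3] at this
      have hkk := hkey p hp hc
      rw [← hkk] at this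
      exact add_right_cancel this
    · rw [hbase p hp hc]
      exact hbase' p hp hc
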